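/- Let α satisfy assumptions (I)–(III) with degeneracy parameter μ. Then for every u ∈ V²_α(x₀,ℓ) one has lim_{x → x₀⁺} (x − x₀)·α(x)·|u'(x)|² = 0. -/

import Mathlib

open MeasureTheory Set Filter Topology



lemma mono_aux {x₀ a b ν : ℝ} {α α' : ℝ → ℝ} (hx₀a : x₀ < a) (hab : a ≤ b)
    (hcont : ContinuousOn α (Icc a b))
    (hder : ∀ t ∈ Ioo a b, HasDerivAt α (α' t) t)
    (hineq : ∀ t ∈ Ioo a b, ν * α t ≤ (t - x₀) * α' t) :
    α a * (a - x₀) ^ (-ν : ℝ) ≤ α b * (b - x₀) ^ (-ν : ℝ) := by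
  have hpos : ∀ t ∈ Icc a b, (0:ℝ) < t - x₀ := fun t ht => by
    have := ht.1; linarith
  set F : ℝ → ℝ := fun t => α t * (t - x₀) ^ (-ν : ℝ) with hF
  have hFd : ∀ t ∈ Ioo a b, HasDerivAt F
      (α' t * (t - x₀) ^ (-ν : ℝ) + α t * (1 * (-ν) * (t - x₀) ^ (-ν - 1 : ℝ))) t := by
    intro t ht
    have h1 : HasDerivAt (fun s : ℝ => s - x₀) 1 t := (hasDerivAt_id t).sub_const x₀
    have h2 := h1.rpow_const (p := (-ν : ℝ)) (Or.inl (hpos t (Ioo_subset_Icc_self ht)).ne')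
    exact (hder t ht).mul h2
  have hmono : MonotoneOn F (Icc a b) := by
    apply monotoneOn_of_deriv_nonneg (convex_Icc a b)
    · exact hcont.mul (((continuous_id.sub continuous_const).continuousOn).rpow_const
        (fun t ht => Or.inl (hpos t ht).ne'))
    · rw [interior_Icc]
      exact fun t ht => (hFd t ht).differentiableAt.differentiableWithinAt
    · rw [interior_Icc]
      intro t ht
      rw [(hFd t ht).deriv]
      have hp : (0:ℝ) < (t - x₀) ^ (-ν - 1 : ℝ) :=
        Real.rpow_pos_of_pos (hpos t (Ioo_subset_Icc_self ht)) _
      have hr : (t - x₀) ^ (-ν : ℝ) = (t - x₀) * (t - x₀) ^ (-ν - 1 : ℝ) := by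
        rw [show (-ν:ℝ) = 1 + (-ν-1) by ring,
          Real.rpow_add (hpos t (Ioo_subset_Icc_self ht)), Real.rpow_one]
        ring_nf
      rw [hr]
      have := hineq t ht
      nlinarith [hp, this]
  have := hmono (left_mem_Icc.mpr hab) (right_mem_Icc.mpr hab) hab
  exact this


lemma anti_aux {x₀ a b ν : ℝ} {α α' : ℝ → ℝ} (hx₀a : x₀ < a) (hab : a ≤ b)
    (hcont : ContinuousOn α (Icc a b))
    (hder : ∀ t ∈ Ioo a b, HasDerivAt α (α' t) t)
    (hineq : ∀ t ∈ Ioo a b, (t - x₀) * α' t ≤ ν * α t) :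
    α b * (b - x₀) ^ (-ν : ℝ) ≤ α a * (a - x₀) ^ (-ν : ℝ) := by
  have hpos : ∀ t ∈ Icc a b, (0:ℝ) < t - x₀ := fun t ht => by
    have := ht.1; linarith
  set F : ℝ → ℝ := fun t => α t * (t - x₀) ^ (-ν : ℝ) with hF
  have hFd : ∀ t ∈ Ioo a b, HasDerivAt F
      (α' t * (t - x₀) ^ (-ν : ℝ) + α t * (1 * (-ν) * (t - x₀) ^ (-ν - 1 : ℝ))) t := by
    intro t ht
    have h1 : HasDerivAt (fun s : ℝ => s - x₀) 1 t := (hasDerivAt_id t).sub_const x₀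
    have h2 := h1.rpow_const (p := (-ν : ℝ)) (Or.inl (hpos t (Ioo_subset_Icc_self ht)).ne')
    exact (hder t ht).mul h2
  have hanti : AntitoneOn F (Icc a b) := by
    apply antitoneOn_of_deriv_nonpos (convex_Icc a b)
    · exact hcont.mul (((continuous_id.sub continuous_const).continuousOn).rpow_const
        (fun t ht => Or.inl (hpos t ht).ne'))
    · rw [interior_Icc]
      exact fun t ht => (hFd t ht).differentiableAt.differentiableWithinAt
    · rw [interior_Icc]
      intro t ht
      rw [(hFd t ht).deriv]
      have hp : (0:ℝ) < (t - x₀) ^ (-ν - 1 : ℝ) :=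
        Real.rpow_pos_of_pos (hpos t (Ioo_subset_Icc_self ht)) _
      have hr : (t - x₀) ^ (-ν : ℝ) = (t - x₀) * (t - x₀) ^ (-ν - 1 : ℝ) := by
        rw [show (-ν:ℝ) = 1 + (-ν-1) by ring,
          Real.rpow_add (hpos t (Ioo_subset_Icc_self ht)), Real.rpow_one]
        ring_nf
      rw [hr]
      have := hineq t ht
      nlinarith [hp, this]
  exact hanti (left_mem_Icc.mpr hab) (right_mem_Icc.mpr hab) hab


lemma cs_aux {a b : ℝ} (hab : a ≤ b) {f : ℝ → ℝ} (hf : IntegrableOn f (Ioc a b))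
    (hf2 : IntegrableOn (fun t => f t ^ 2) (Ioc a b)) :
    (∫ t in Ioc a b, |f t|) ^ 2 ≤ (b - a) * ∫ t in Ioc a b, f t ^ 2 := by
  set I := ∫ t in Ioc a b, |f t| with hIdef
  set E := ∫ t in Ioc a b, f t ^ 2 with hEdef
  have hInn : 0 ≤ I := setIntegral_nonneg measurableSet_Ioc (fun t _ => abs_nonneg _)
  have hEnn : 0 ≤ E := setIntegral_nonneg measurableSet_Ioc (fun t _ => sq_nonneg _)
  have hm : (0:ℝ) ≤ b - a := by linarith
  have hconst : ∀ c : ℝ, IntegrableOn (fun _ : ℝ => c) (Ioc a b) volume :=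
    fun c => integrableOn_const measure_Ioc_lt_top.ne
  have key : ∀ c : ℝ, 0 < c → I ≤ c * (b - a) + E / (4 * c) := by
    intro c hc
    have hptw : ∀ t ∈ Ioc a b, |f t| ≤ c + f t ^ 2 / (4 * c) := by
      intro t _
      rw [← sub_nonneg]
      have heq : c + f t ^ 2 / (4 * c) - |f t| = (|f t| - 2 * c) ^ 2 / (4 * c) := by
        field_simp
        nlinarith [sq_abs (f t)]
      rw [heq]
      positivity
    have hint2 : IntegrableOn (fun t => c + f t ^ 2 / (4 * c)) (Ioc a b) volume :=
      (hconst c).add (hf2.div_const _)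
    calc I ≤ ∫ t in Ioc a b, (c + f t ^ 2 / (4 * c)) :=
          setIntegral_mono_on hf.abs hint2 measurableSet_Ioc hptw
      _ = c * (b - a) + E / (4 * c) := by
          rw [integral_add (hconst c) (hf2.div_const _), setIntegral_const, integral_div,
            Real.volume_real_Ioc_of_le hab]
          rw [smul_eq_mul]; ring
  rcases eq_or_lt_of_le hEnn with hE0 | hEpos
  · have hI0 : I ≤ 0 := by
      by_contra hI
      push_neg at hI
      have hc : 0 < I / (2 * (b - a + 1)) := by positivity
      have := key _ hc
      rw [← hE0] at this
      have h2 : I / (2 * (b - a + 1)) * (b - a) < I := by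
        rw [div_mul_eq_mul_div, div_lt_iff₀ (by positivity)]
        nlinarith
      simp only [zero_div, add_zero] at this
      linarith
    have : I = 0 := le_antisymm hI0 hInn
    rw [this, ← hE0]
    norm_num
  · have hba : 0 < b - a := by
      rcases lt_or_eq_of_le hab with h | h
      · linarith
      · exfalso; rw [← h] at hEdef; simp [Ioc_self] at hEdef; rw [hEdef] at hEpos; linarith
    set c := Real.sqrt (E / (4 * (b - a))) with hcdef
    have hc : 0 < c := Real.sqrt_pos.mpr (by positivity)
    have hc2 : c ^ 2 = E / (4 * (b - a)) := Real.sq_sqrt (by positivity)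
    have hEeq : E = c ^ 2 * (4 * (b - a)) := by rw [hc2]; field_simp
    have hkey := key c hc
    have hsimp : E / (4 * c) = c * (b - a) := by rw [hEeq]; field_simp
    rw [hsimp] at hkey
    nlinarith

/-- Assumptions (I)-(III) on the degenerate weight `α` on `[x₀, ℓ]`, with degeneracy
parameter `μ`: `α` is positive on `(x₀, ℓ]` and vanishes at `x₀`; `α` is continuous on
`[x₀, ℓ]` and `C¹` on `(x₀, ℓ]` with derivative `α'`; and
`μ = sup_{x₀ < x ≤ ℓ} (x - x₀)|α'(x)|/α(x) = lim_{x → x₀⁺} (x - x₀)|α'(x)|/α(x) < 2`. -/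
def DegWeight (x₀ ℓ μ : ℝ) (α α' : ℝ → ℝ) : Prop :=
  (∀ x ∈ Ioc x₀ ℓ, 0 < α x) ∧ α x₀ = 0 ∧
  ContinuousOn α (Icc x₀ ℓ) ∧
  (∀ x ∈ Ioc x₀ ℓ, HasDerivWithinAt α (α' x) (Ioc x₀ ℓ) x) ∧
  ContinuousOn α' (Ioc x₀ ℓ) ∧
  IsLUB ((fun x => (x - x₀) * |α' x| / α x) '' Ioc x₀ ℓ) μ ∧
  Tendsto (fun x => (x - x₀) * |α' x| / α x) (𝓝[>] x₀) (𝓝 μ) ∧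
  μ < 2

/-- `u ∈ V¹_α(x₀, ℓ)` (real-valued): `u ∈ L²(x₀, ℓ)`, `u` is locally absolutely continuous
on `(x₀, ℓ]` with a.e. derivative `u'` (expressed via the fundamental theorem of calculus on
compact subintervals of `(x₀, ℓ]`), and `√α · u' ∈ L²(x₀, ℓ)`. -/
def MemV1 (x₀ ℓ : ℝ) (α u u' : ℝ → ℝ) : Prop :=
  MemLp u 2 (volume.restrict (Ioo x₀ ℓ)) ∧
  (∀ x y : ℝ, x₀ < x → x ≤ y → y ≤ ℓ →
    IntervalIntegrable u' volume x y ∧ u y - u x = ∫ t in x..y, u' t) ∧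
  MemLp (fun x => Real.sqrt (α x) * u' x) 2 (volume.restrict (Ioo x₀ ℓ))

/-- `u ∈ V²_α(x₀, ℓ)` (real-valued): `u ∈ V¹_α(x₀, ℓ)` and `α·u' ∈ H¹(x₀, ℓ)`, i.e.
`α·u' ∈ L²`, it is absolutely continuous with a.e. derivative `g' = (α u')' ∈ L²`. -/
def MemV2 (x₀ ℓ : ℝ) (α u u' g' : ℝ → ℝ) : Prop :=
  MemV1 x₀ ℓ α u u' ∧
  MemLp (fun x => α x * u' x) 2 (volume.restrict (Ioo x₀ ℓ)) ∧
  MemLp g' 2 (volume.restrict (Ioo x₀ ℓ)) ∧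
  ∀ x y : ℝ, x₀ < x → x ≤ y → y ≤ ℓ →
    IntervalIntegrable g' volume x y ∧ α y * u' y - α x * u' x = ∫ t in x..y, g' t

set_option maxHeartbeats 2000000 in
/-- If `α` satisfies (I)-(III) with degeneracy parameter `μ`, then every
`u ∈ V²_α(x₀, ℓ)` satisfies `lim_{x → x₀⁺} (x - x₀)·α(x)·|u'(x)|² = 0`. -/
theorem limit_xau_sq (x₀ ℓ μ : ℝ) (α α' : ℝ → ℝ) (hxl : x₀ < ℓ)
    (h : DegWeight x₀ ℓ μ α α') (u u' g' : ℝ → ℝ) (hu : MemV2 x₀ ℓ α u u' g') :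
    Tendsto (fun x => (x - x₀) * α x * (u' x) ^ 2) (𝓝[>] x₀) (𝓝 0) := by
  obtain ⟨hpos, hzero, hcont, hderiv, hcont', hlub, htend, hmu2⟩ := h
  obtain ⟨⟨hu2, hFTCu, hsqrt⟩, hg2, hg'2, hFTCg⟩ := hu
  set g : ℝ → ℝ := fun t => α t * u' t with hgdef
  -- basic filter facts
  have hIoc_mem : Ioc x₀ ℓ ∈ 𝓝[>] x₀ := by
    rw [← nhdsWithin_Ioc_eq_nhdsGT hxl]
    exact self_mem_nhdsWithin
  have exists_Ioc : ∀ {s : Set ℝ}, s ∈ 𝓝[>] x₀ → ∃ δ, x₀ < δ ∧ δ ≤ ℓ ∧ Ioc x₀ δ ⊆ s := by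
    intro s hs
    obtain ⟨v, hv, hsub⟩ := mem_nhdsGT_iff_exists_Ioc_subset.mp (inter_mem hs hIoc_mem)
    refine ⟨min v ℓ, lt_min hv hxl, min_le_right _ _, fun t ht => ?_⟩
    exact (hsub ⟨ht.1, le_trans ht.2 (min_le_left _ _)⟩).1
  -- continuity of α at x₀ from the right
  have hαtend : Tendsto α (𝓝[>] x₀) (𝓝 0) := by
    have h1 : ContinuousWithinAt α (Icc x₀ ℓ) x₀ := hcont x₀ ⟨le_rfl, hxl.le⟩
    rw [ContinuousWithinAt, hzero] at h1
    refine h1.mono_left ?_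
    rw [← nhdsWithin_Ioc_eq_nhdsGT hxl]
    exact nhdsWithin_mono _ Ioc_subset_Icc_self
  -- differentiability in the interior
  have hda : ∀ t ∈ Ioo x₀ ℓ, HasDerivAt α (α' t) t := by
    intro t ht
    exact (hderiv t (Ioo_subset_Ioc_self ht)).hasDerivAt
      (mem_nhds_iff.mpr ⟨Ioo x₀ ℓ, Ioo_subset_Ioc_self, isOpen_Ioo, ht⟩)
  -- the sup bound
  have hub : ∀ t ∈ Ioc x₀ ℓ, (t - x₀) * |α' t| ≤ μ * α t := by
    intro t ht
    have h1 : (t - x₀) * |α' t| / α t ≤ μ := hlub.1 ⟨t, ht, rfl⟩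
    rw [div_le_iff₀ (hpos t ht)] at h1
    linarith [h1]
  have hubs : ∀ t ∈ Ioc x₀ ℓ, (t - x₀) * α' t ≤ μ * α t := by
    intro t ht
    refine le_trans ?_ (hub t ht)
    have h1 : (0:ℝ) ≤ t - x₀ := by linarith [ht.1]
    exact mul_le_mul_of_nonneg_left (le_abs_self _) h1
  have hμ0 : 0 ≤ μ := by
    refine le_trans ?_ (hlub.1 ⟨ℓ, ⟨hxl, le_rfl⟩, rfl⟩)
    have h1 := hpos ℓ ⟨hxl, le_rfl⟩
    have h2 : (0:ℝ) < ℓ - x₀ := by linarith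
    positivity
  -- lower bound for α
  have hαlow : ∀ x ∈ Ioc x₀ ℓ, α ℓ * (ℓ - x₀) ^ (-μ : ℝ) ≤ α x * (x - x₀) ^ (-μ : ℝ) := by
    intro x hx
    exact anti_aux hx.1 hx.2 (hcont.mono (Icc_subset_Icc hx.1.le le_rfl))
      (fun t ht => hda t ⟨hx.1.trans ht.1, ht.2⟩)
      (fun t ht => hubs t ⟨hx.1.trans ht.1, ht.2.le⟩)
  have hμpos : 0 < μ := by
    rcases eq_or_lt_of_le hμ0 with heq | h; swap
    · exact h
    exfalso
    have hev : ∀ᶠ x in 𝓝[>] x₀, α ℓ ≤ α x := by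
      filter_upwards [hIoc_mem] with x hx
      have := hαlow x hx
      rw [← heq] at this
      simpa using this
    have : α ℓ ≤ 0 := ge_of_tendsto hαtend hev
    linarith [hpos ℓ ⟨hxl, le_rfl⟩]
  -- the quadratic comparison
  have hK : ∀ x ∈ Ioc x₀ ℓ, (x - x₀) ^ 2 ≤ (ℓ - x₀) ^ 2 / α ℓ * α x := by
    intro x hx
    have hxp : (0:ℝ) < x - x₀ := by linarith [hx.1]
    have hlp : (0:ℝ) < ℓ - x₀ := by linarith
    have hαx := hpos x hx
    have hαl := hpos ℓ ⟨hxl, le_rfl⟩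
    have hPl : (0:ℝ) < (ℓ - x₀) ^ (μ:ℝ) := Real.rpow_pos_of_pos hlp _
    have hPx : (0:ℝ) < (x - x₀) ^ (μ:ℝ) := Real.rpow_pos_of_pos hxp _
    have hA := hPx.ne'
    have hB := hPl.ne'
    have h1 := hαlow x hx
    rw [Real.rpow_neg hlp.le, Real.rpow_neg hxp.le] at h1
    have h2 : (x - x₀) ^ (μ:ℝ) * α ℓ ≤ α x * (ℓ - x₀) ^ (μ:ℝ) := by
      calc (x - x₀) ^ (μ:ℝ) * α ℓ
          = α ℓ * ((ℓ - x₀) ^ (μ:ℝ))⁻¹ * ((x - x₀) ^ (μ:ℝ) * (ℓ - x₀) ^ (μ:ℝ)) := by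
            field_simp
        _ ≤ α x * ((x - x₀) ^ (μ:ℝ))⁻¹ * ((x - x₀) ^ (μ:ℝ) * (ℓ - x₀) ^ (μ:ℝ)) :=
            mul_le_mul_of_nonneg_right h1 (by positivity)
        _ = α x * (ℓ - x₀) ^ (μ:ℝ) := by field_simp
    have h2' : (x - x₀) ^ (μ:ℝ) ≤ α x * (ℓ - x₀) ^ (μ:ℝ) / α ℓ := (le_div_iff₀ hαl).mpr h2
    have h4 : (x - x₀) ^ (2 - μ:ℝ) ≤ (ℓ - x₀) ^ (2 - μ:ℝ) :=
      Real.rpow_le_rpow hxp.le (by linarith [hx.2]) (by linarith)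
    have h6 : (ℓ - x₀) ^ (μ:ℝ) * (ℓ - x₀) ^ (2 - μ:ℝ) = (ℓ - x₀) ^ (2:ℝ) := by
      rw [← Real.rpow_add hlp]; norm_num
    have h5 : (x - x₀) ^ (2:ℝ) ≤ α x * (ℓ - x₀) ^ (μ:ℝ) / α ℓ * (ℓ - x₀) ^ (2 - μ:ℝ) := by
      calc (x - x₀) ^ (2:ℝ) = (x - x₀) ^ (μ:ℝ) * (x - x₀) ^ (2 - μ:ℝ) := by
            rw [← Real.rpow_add hxp]; norm_num
        _ ≤ (x - x₀) ^ (μ:ℝ) * (ℓ - x₀) ^ (2 - μ:ℝ) :=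
            mul_le_mul_of_nonneg_left h4 hPx.le
        _ ≤ α x * (ℓ - x₀) ^ (μ:ℝ) / α ℓ * (ℓ - x₀) ^ (2 - μ:ℝ) :=
            mul_le_mul_of_nonneg_right h2' (Real.rpow_nonneg hlp.le _)
    calc (x - x₀) ^ 2 = (x - x₀) ^ (2:ℝ) := by
          rw [show ((2:ℝ)) = ((2:ℕ):ℝ) by norm_num, Real.rpow_natCast]
      _ ≤ α x * (ℓ - x₀) ^ (μ:ℝ) / α ℓ * (ℓ - x₀) ^ (2 - μ:ℝ) := h5
      _ = (ℓ - x₀) ^ (2:ℝ) / α ℓ * α x := by rw [← h6]; field_simp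
      _ = (ℓ - x₀) ^ 2 / α ℓ * α x := by
          rw [show ((2:ℝ)) = ((2:ℕ):ℝ) by norm_num, Real.rpow_natCast]
  -- integrability facts
  haveI : IsFiniteMeasure (volume.restrict (Ioo x₀ ℓ)) :=
    ⟨by rw [Measure.restrict_apply_univ]; exact measure_Ioo_lt_top⟩
  have hg'int : IntegrableOn g' (Icc x₀ ℓ) := by
    rw [integrableOn_Icc_iff_integrableOn_Ioo]
    exact hg'2.integrable (by norm_num)
  have hg'sqint : IntegrableOn (fun t => g' t ^ 2) (Icc x₀ ℓ) := by
    rw [integrableOn_Icc_iff_integrableOn_Ioo]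
    exact hg'2.integrable_sq
  have hau2int : IntegrableOn (fun t => α t * u' t ^ 2) (Ioo x₀ ℓ) := by
    refine (MemLp.integrable_sq hsqrt).congr ?_
    rw [Filter.eventuallyEq_iff_exists_mem]
    refine ⟨Ioo x₀ ℓ, ?_, fun t ht => ?_⟩
    · rw [mem_ae_iff, Measure.restrict_apply' measurableSet_Ioo]
      simp
    · show (Real.sqrt (α t) * u' t) ^ 2 = α t * u' t ^ 2
      rw [mul_pow, Real.sq_sqrt (hpos t (Ioo_subset_Ioc_self ht)).le]
  -- primitives
  have hIccle : ∀ {x : ℝ}, x ∈ Ioc x₀ ℓ → Ioc x₀ x ⊆ Icc x₀ ℓ :=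
    fun {x} hx t ht => ⟨ht.1.le, ht.2.trans hx.2⟩
  set E1 : ℝ → ℝ := fun x => ∫ t in Ioc x₀ x, g' t with hE1def
  set E2 : ℝ → ℝ := fun x => ∫ t in Ioc x₀ x, g' t ^ 2 with hE2def
  have hprim : ∀ (f : ℝ → ℝ), IntegrableOn f (Icc x₀ ℓ) →
      Tendsto (fun x => ∫ t in Ioc x₀ x, f t) (𝓝[>] x₀) (𝓝 0) := by
    intro f hf
    have hc := (intervalIntegral.continuousOn_primitive hf) x₀ ⟨le_rfl, hxl.le⟩
    rw [ContinuousWithinAt] at hc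
    have h0 : (∫ t in Ioc x₀ x₀, f t) = 0 := by simp
    rw [h0] at hc
    exact hc.mono_left
      (by rw [← nhdsWithin_Ioc_eq_nhdsGT hxl]; exact nhdsWithin_mono _ Ioc_subset_Icc_self)
  have hE1tend : Tendsto E1 (𝓝[>] x₀) (𝓝 0) := hprim g' hg'int
  have hE2tend : Tendsto E2 (𝓝[>] x₀) (𝓝 0) := hprim _ hg'sqint
  have hE2nonneg : ∀ x, 0 ≤ E2 x :=
    fun x => setIntegral_nonneg measurableSet_Ioc fun t _ => sq_nonneg _
  -- limit of g at x₀
  set L : ℝ := g ℓ - ∫ t in Ioc x₀ ℓ, g' t with hLdef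
  have hgrep : ∀ x ∈ Ioc x₀ ℓ, g x = L + E1 x := by
    intro x hx
    have hFTC := (hFTCg x ℓ hx.1 hx.2 le_rfl).2
    have hsplit : (∫ t in Ioc x₀ ℓ, g' t) = (∫ t in Ioc x₀ x, g' t) + ∫ t in Ioc x ℓ, g' t := by
      rw [← setIntegral_union (Ioc_disjoint_Ioc_of_le le_rfl) measurableSet_Ioc
        (hg'int.mono_set (hIccle hx))
        (hg'int.mono_set (fun t ht => ⟨(hx.1.trans ht.1).le, ht.2⟩)),
        Ioc_union_Ioc_eq_Ioc hx.1.le hx.2]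
    have hio : (∫ t in x..ℓ, g' t) = ∫ t in Ioc x ℓ, g' t := intervalIntegral.integral_of_le hx.2
    rw [hio] at hFTC
    simp only [hgdef, hLdef, hE1def]
    linarith [hFTC, hsplit]
  have hgtend : Tendsto g (𝓝[>] x₀) (𝓝 L) := by
    have h1 : Tendsto (fun x => L + E1 x) (𝓝[>] x₀) (𝓝 (L + 0)) := tendsto_const_nhds.add hE1tend
    rw [add_zero] at h1
    exact Tendsto.congr' (by filter_upwards [hIoc_mem] with x hx; exact (hgrep x hx).symm) h1
  -- the identity
  have hident : ∀ x ∈ Ioc x₀ ℓ, (x - x₀) * α x * u' x ^ 2 = (x - x₀) / α x * g x ^ 2 := by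
    intro x hx
    have hαx := (hpos x hx).ne'
    simp only [hgdef]
    field_simp
  have hposval : ∀ᶠ x in 𝓝[>] x₀, 0 ≤ (x - x₀) * α x * u' x ^ 2 := by
    filter_upwards [hIoc_mem] with x hx
    have h1 := (hpos x hx).le
    have hxp : (0:ℝ) ≤ x - x₀ := by linarith [hx.1]
    positivity
  rcases eq_or_ne L 0 with hL0 | hLne
  · -- case L = 0
    have hbound : ∀ᶠ x in 𝓝[>] x₀, (x - x₀) * α x * u' x ^ 2 ≤ (ℓ - x₀) ^ 2 / α ℓ * E2 x := by
      filter_upwards [hIoc_mem] with x hx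
      have hαx := hpos x hx
      have hxp : (0:ℝ) < x - x₀ := by linarith [hx.1]
      have hgx : g x = E1 x := by rw [hgrep x hx, hL0, zero_add]
      have habs : |g x| ≤ ∫ t in Ioc x₀ x, |g' t| := by
        calc |g x| = |∫ t in Ioc x₀ x, g' t| := by rw [hgx]
          _ ≤ ∫ t in Ioc x₀ x, |g' t| := by
              simpa using norm_integral_le_integral_norm (μ := volume.restrict (Ioc x₀ x)) g'
      have hcs := cs_aux hx.1.le (f := g') (hg'int.mono_set (hIccle hx))
        (hg'sqint.mono_set (hIccle hx))
      have hg2le : g x ^ 2 ≤ (x - x₀) * E2 x := by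
        calc g x ^ 2 = |g x| ^ 2 := (sq_abs _).symm
          _ ≤ (∫ t in Ioc x₀ x, |g' t|) ^ 2 := pow_le_pow_left₀ (abs_nonneg _) habs 2
          _ ≤ (x - x₀) * E2 x := hcs
      rw [hident x hx]
      calc (x - x₀) / α x * g x ^ 2 ≤ (x - x₀) / α x * ((x - x₀) * E2 x) :=
            mul_le_mul_of_nonneg_left hg2le (by positivity)
        _ = (x - x₀) ^ 2 / α x * E2 x := by field_simp
        _ ≤ (ℓ - x₀) ^ 2 / α ℓ * E2 x := by
            refine mul_le_mul_of_nonneg_right ?_ (hE2nonneg x)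
            rw [div_le_iff₀ hαx]
            exact hK x hx
    have hlim : Tendsto (fun x => (ℓ - x₀) ^ 2 / α ℓ * E2 x) (𝓝[>] x₀) (𝓝 0) := by
      have := hE2tend.const_mul ((ℓ - x₀) ^ 2 / α ℓ)
      simpa using this
    exact tendsto_of_tendsto_of_tendsto_of_le_of_le' tendsto_const_nhds hlim hposval hbound
  · -- case L ≠ 0
    have hL2 : 0 < L ^ 2 := by
      rcases hLne.lt_or_gt with h1 | h1 <;> nlinarith
    have hev : ∀ᶠ x in 𝓝[>] x₀, |L| / 2 < |g x| :=
      hgtend.abs.eventually (eventually_gt_nhds (half_lt_self (abs_pos.mpr hLne)))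
    obtain ⟨δ₁, hδ₁, hδ₁ℓ, hδ₁sub⟩ := exists_Ioc hev
    -- integrability of 1/α near x₀
    have hinv_int : IntegrableOn (fun t => (α t)⁻¹) (Ioo x₀ δ₁) := by
      have hmeas : AEStronglyMeasurable (fun t => (α t)⁻¹) (volume.restrict (Ioo x₀ δ₁)) := by
        refine ContinuousOn.aestronglyMeasurable ?_ measurableSet_Ioo
        refine ContinuousOn.inv₀ (hcont.mono (fun t ht => ⟨ht.1.le, ht.2.le.trans hδ₁ℓ⟩)) ?_
        exact fun t ht => (hpos t ⟨ht.1, ht.2.le.trans hδ₁ℓ⟩).ne'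
      refine Integrable.mono'
        ((hau2int.mono_set (fun t ht => ⟨ht.1, lt_of_lt_of_le ht.2 hδ₁ℓ⟩)).const_mul
          (4 / L ^ 2)) hmeas ?_
      rw [ae_restrict_iff' measurableSet_Ioo]
      refine ae_of_all _ fun t ht => ?_
      have htIoc : t ∈ Ioc x₀ ℓ := ⟨ht.1, ht.2.le.trans hδ₁ℓ⟩
      have hαt := hpos t htIoc
      have hgabs : |L| / 2 < |g t| := hδ₁sub ⟨ht.1, ht.2.le⟩
      have hgg2 : L ^ 2 / 4 ≤ g t ^ 2 := by
        have ha1 : (|L| / 2) ^ 2 ≤ |g t| ^ 2 :=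
          pow_le_pow_left₀ (by positivity) hgabs.le 2
        rw [sq_abs] at ha1
        have ha2 : (|L| / 2) ^ 2 = L ^ 2 / 4 := by rw [div_pow, sq_abs]; norm_num
        linarith
      rw [Real.norm_eq_abs, abs_of_pos (inv_pos.mpr hαt)]
      have hid : α t * u' t ^ 2 = g t ^ 2 / α t := by
        simp only [hgdef]; field_simp
      have h14 : (1:ℝ) ≤ 4 / L ^ 2 * g t ^ 2 := by
        calc (1:ℝ) = 4 / L ^ 2 * (L ^ 2 / 4) := by field_simp
          _ ≤ 4 / L ^ 2 * g t ^ 2 := mul_le_mul_of_nonneg_left hgg2 (by positivity)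
      calc (α t)⁻¹ = 1 / α t := inv_eq_one_div _
        _ ≤ (4 / L ^ 2 * g t ^ 2) / α t := (div_le_div_iff_of_pos_right hαt).mpr h14
        _ = 4 / L ^ 2 * (α t * u' t ^ 2) := by rw [hid, mul_div_assoc]
    have hinv_int' : IntegrableOn (fun t => (α t)⁻¹) (Icc x₀ δ₁) := by
      rw [integrableOn_Icc_iff_integrableOn_Ioo]; exact hinv_int
    set ρ : ℝ → ℝ := fun x => ∫ t in Ioc x₀ x, (α t)⁻¹ with hρdef
    have hρtend : Tendsto ρ (𝓝[>] x₀) (𝓝 0) := by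
      have hc := (intervalIntegral.continuousOn_primitive hinv_int') x₀ ⟨le_rfl, hδ₁.le⟩
      rw [ContinuousWithinAt] at hc
      have h0 : (∫ t in Ioc x₀ x₀, (α t)⁻¹) = 0 := by simp
      rw [h0] at hc
      exact hc.mono_left
        (by rw [← nhdsWithin_Ioc_eq_nhdsGT hδ₁]
            exact nhdsWithin_mono _ Ioc_subset_Icc_self)
    -- choice of ν
    set ν : ℝ := min μ 1 / 2 with hνdef
    have hmin : 0 < min μ 1 := lt_min hμpos one_pos
    have hν0 : 0 < ν := by rw [hνdef]; positivity
    have hν1 : ν < 1 := by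
      have := min_le_right μ 1
      rw [hνdef]; linarith
    have hνμ : ν < μ := by
      have := min_le_left μ 1
      rw [hνdef]; linarith
    have hδ₁mem : Ioc x₀ δ₁ ∈ 𝓝[>] x₀ := by
      rw [← nhdsWithin_Ioc_eq_nhdsGT hδ₁]; exact self_mem_nhdsWithin
    have hev2 : ∀ᶠ x in 𝓝[>] x₀, ν < (x - x₀) * |α' x| / α x :=
      htend.eventually (eventually_gt_nhds hνμ)
    obtain ⟨δ, hδ0, hδℓ, hδsub⟩ := exists_Ioc (inter_mem hev2 hδ₁mem)
    have hδδ₁ : δ ≤ δ₁ := (hδsub ⟨hδ0, le_rfl⟩).2.2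
    have hδmem : Ioc x₀ δ ∈ 𝓝[>] x₀ := by
      rw [← nhdsWithin_Ioc_eq_nhdsGT hδ0]; exact self_mem_nhdsWithin
    have habs' : ∀ t ∈ Ioc x₀ δ, ν * α t < (t - x₀) * |α' t| := by
      intro t ht
      have h1 : ν < (t - x₀) * |α' t| / α t := (hδsub ht).1
      have hαt := hpos t ⟨ht.1, ht.2.trans hδℓ⟩
      rw [lt_div_iff₀ hαt] at h1
      linarith
    have hα'ne : ∀ t ∈ Ioc x₀ δ, α' t ≠ 0 := by
      intro t ht h0
      have h1 := habs' t ht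
      have hαt := hpos t ⟨ht.1, ht.2.trans hδℓ⟩
      rw [h0] at h1
      simp only [abs_zero, mul_zero] at h1
      nlinarith
    have hα'pos : ∀ t ∈ Ioc x₀ δ, 0 < α' t := by
      by_contra hcon
      push_neg at hcon
      obtain ⟨t₀, ht₀, ht₀le⟩ := hcon
      have ht₀neg : α' t₀ < 0 := lt_of_le_of_ne ht₀le (hα'ne t₀ ht₀)
      have hallneg : ∀ t ∈ Ioc x₀ δ, α' t < 0 := by
        intro t ht
        by_contra hge
        push_neg at hge
        have htpos : 0 < α' t := lt_of_le_of_ne hge (Ne.symm (hα'ne t ht))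
        have hsub2 : uIcc t₀ t ⊆ Ioc x₀ δ :=
          Set.ordConnected_Ioc.uIcc_subset ht₀ ht
        have hcont2 : ContinuousOn α' (uIcc t₀ t) :=
          hcont'.mono (hsub2.trans (fun r hr => ⟨hr.1, hr.2.trans hδℓ⟩))
        have h0mem : (0:ℝ) ∈ uIcc (α' t₀) (α' t) := by
          rw [Set.mem_uIcc]; left; exact ⟨ht₀neg.le, htpos.le⟩
        obtain ⟨r, hr, hr0⟩ := intermediate_value_uIcc hcont2 h0mem
        exact hα'ne r (hsub2 hr) hr0
      have hge' : ∀ x ∈ Ioc x₀ δ, α δ ≤ α x := by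
        intro x hx
        have hineq : ∀ r ∈ Ioo x δ, (r - x₀) * α' r ≤ (0:ℝ) * α r := by
          intro r hr
          have hrneg := hallneg r ⟨hx.1.trans hr.1, hr.2.le⟩
          have hr0 : (0:ℝ) < r - x₀ := by
            have := hx.1.trans hr.1; linarith
          nlinarith
        have h2 := anti_aux (x₀ := x₀) (ν := 0) hx.1 hx.2
          (hcont.mono (fun r hr => ⟨hx.1.le.trans hr.1, hr.2.trans hδℓ⟩))
          (fun r hr => hda r ⟨hx.1.trans hr.1, lt_of_lt_of_le hr.2 hδℓ⟩)
          hineq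
        simpa using h2
      have hδ0' : α δ ≤ 0 := ge_of_tendsto hαtend (by
        filter_upwards [hδmem] with x hx
        exact hge' x hx)
      linarith [hpos δ ⟨hδ0, hδℓ⟩]
    have hlow : ∀ t ∈ Ioc x₀ δ, ν * α t ≤ (t - x₀) * α' t := by
      intro t ht
      have h1 := habs' t ht
      rw [abs_of_pos (hα'pos t ht)] at h1
      exact h1.le
    -- the key comparison
    have hkey : ∀ x ∈ Ioc x₀ δ, (x - x₀) / α x ≤ (1 - ν) * ρ x := by
      intro x hx
      have hxp : (0:ℝ) < x - x₀ := by linarith [hx.1]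
      have hαx := hpos x ⟨hx.1, hx.2.trans hδℓ⟩
      have hptw : ∀ s ∈ Ioo x₀ x, (x - x₀) ^ (ν:ℝ) / α x * (s - x₀) ^ (-ν:ℝ) ≤ (α s)⁻¹ := by
        intro s hs
        have hsp : (0:ℝ) < s - x₀ := by linarith [hs.1]
        have hαs := hpos s ⟨hs.1, (hs.2.le.trans hx.2).trans hδℓ⟩
        have hmono := mono_aux (x₀ := x₀) (ν := ν) hs.1 hs.2.le
          (hcont.mono (fun r hr => ⟨hs.1.le.trans hr.1, (hr.2.trans hx.2).trans hδℓ⟩))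
          (fun r hr => hda r ⟨hs.1.trans hr.1, lt_of_lt_of_le (lt_of_lt_of_le (hr.2.trans_le hx.2) hδℓ) le_rfl⟩)
          (fun r hr => hlow r ⟨hs.1.trans hr.1, hr.2.le.trans hx.2⟩)
        have hPs : (0:ℝ) < (s - x₀) ^ (-ν:ℝ) := Real.rpow_pos_of_pos hsp _
        have hPx2 : (0:ℝ) < (x - x₀) ^ (ν:ℝ) := Real.rpow_pos_of_pos hxp _
        have hprod : (x - x₀) ^ (-ν:ℝ) * (x - x₀) ^ (ν:ℝ) = 1 := by
          rw [← Real.rpow_add hxp]; norm_num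
        have h2 := mul_le_mul_of_nonneg_right hmono hPx2.le
        rw [mul_assoc, mul_assoc, hprod, mul_one] at h2
        rw [inv_eq_one_div, div_mul_eq_mul_div, div_le_div_iff₀ hαx hαs]
        nlinarith [h2]
      have hint1 : IntegrableOn (fun s => (x - x₀) ^ (ν:ℝ) / α x * (s - x₀) ^ (-ν:ℝ))
          (Ioo x₀ x) := by
        apply Integrable.const_mul
        have h1 : IntervalIntegrable (fun s : ℝ => s ^ (-ν:ℝ)) volume 0 (x - x₀) :=
          intervalIntegral.intervalIntegrable_rpow' (by linarith)
        have h3 : IntervalIntegrable (fun s => (s - x₀) ^ (-ν:ℝ)) volume x₀ x := by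
          have h2 := h1.comp_sub_right x₀
          simpa using h2
        rwa [intervalIntegrable_iff_integrableOn_Ioo_of_le (by linarith)] at h3
      have hint2 : IntegrableOn (fun s => (α s)⁻¹) (Ioo x₀ x) :=
        hinv_int.mono_set (Ioo_subset_Ioo le_rfl (hx.2.trans hδδ₁))
      have hcomp := setIntegral_mono_on hint1 hint2 measurableSet_Ioo hptw
      have hJ : (∫ s in Ioo x₀ x, (s - x₀) ^ (-ν:ℝ)) = (x - x₀) ^ (1 - ν:ℝ) / (1 - ν) := by
        rw [← integral_Ioc_eq_integral_Ioo, ← intervalIntegral.integral_of_le hx.1.le,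
          intervalIntegral.integral_comp_sub_right (fun s => s ^ (-ν:ℝ)) x₀]
        simp only [sub_self]
        rw [integral_rpow (Or.inl (by linarith : (-1:ℝ) < -ν)),
          Real.zero_rpow (by intro hc; linarith : (-ν) + 1 ≠ 0), sub_zero,
          show (-ν + 1 : ℝ) = 1 - ν by ring]
      rw [integral_const_mul, hJ, ← integral_Ioc_eq_integral_Ioo] at hcomp
      have hpow : (x - x₀) ^ (ν:ℝ) * (x - x₀) ^ (1 - ν:ℝ) = x - x₀ := by
        rw [← Real.rpow_add hxp]; norm_num
      have h1ν : (0:ℝ) < 1 - ν := by linarith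
      have heq2 : (x - x₀) ^ (ν:ℝ) / α x * ((x - x₀) ^ (1 - ν:ℝ) / (1 - ν))
          = (x - x₀) / (α x * (1 - ν)) := by
        rw [div_mul_div_comm, hpow]
      rw [heq2] at hcomp
      rw [div_le_iff₀ (by positivity : (0:ℝ) < α x * (1 - ν))] at hcomp
      simp only [hρdef]
      rw [div_le_iff₀ hαx]
      nlinarith [hcomp]
    -- final squeeze
    have hbound : ∀ᶠ x in 𝓝[>] x₀, (x - x₀) * α x * u' x ^ 2 ≤ (1 - ν) * ρ x * g x ^ 2 := by
      filter_upwards [hδmem] with x hx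
      have hxIoc : x ∈ Ioc x₀ ℓ := ⟨hx.1, hx.2.trans hδℓ⟩
      rw [hident x hxIoc]
      exact mul_le_mul_of_nonneg_right (hkey x hx) (sq_nonneg _)
    have hlim : Tendsto (fun x => (1 - ν) * ρ x * g x ^ 2) (𝓝[>] x₀) (𝓝 0) := by
      have h1 : Tendsto (fun x => (1 - ν) * ρ x) (𝓝[>] x₀) (𝓝 ((1 - ν) * 0)) :=
        tendsto_const_nhds.mul hρtend
      have h2 : Tendsto (fun x => g x ^ 2) (𝓝[>] x₀) (𝓝 (L ^ 2)) := hgtend.pow 2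
      have h3 := h1.mul h2
      simpa using h3
    exact tendsto_of_tendsto_of_tendsto_of_le_of_le' tendsto_const_nhds hlim hposval hbound
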